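/- There exists a constant c(μ,ν) > 0 depending only on μ and ν such that for every bounded continuous g : ℝ → ℝ, the constant κ = κ(g) satisfies (1/c(μ,ν)) e^(−2‖g‖_∞) ≤ κ ≤ c(μ,ν) e^(2‖g‖_∞). -/

import Mathlib

open MeasureTheory Real Filter Set Bornology

/-- `h⁻¹(x) = ∫₀ˣ |y|^(ν−1)(y²+1)^((μ−ν)/2) e^(g(y)) dy`. -/
noncomputable def hInv (μ ν : ℝ) (g : ℝ → ℝ) (x : ℝ) : ℝ :=
  ∫ y in (0:ℝ)..x, |y| ^ (ν - 1) * (y ^ 2 + 1) ^ ((μ - ν) / 2) * Real.exp (g y)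

/-- `(h⁻¹)'(x) = |x|^(ν−1)(x²+1)^((μ−ν)/2) e^(g(x))`. -/
noncomputable def hInvDeriv (μ ν : ℝ) (g : ℝ → ℝ) (x : ℝ) : ℝ :=
  |x| ^ (ν - 1) * (x ^ 2 + 1) ^ ((μ - ν) / 2) * Real.exp (g x)

/-- The constant `κ = κ(g)` determined by `∫_ℝ κ/(x h⁻¹(x) (h⁻¹)'(x)) dx = (μ−ν)π`. -/
noncomputable def kappa (μ ν : ℝ) (g : ℝ → ℝ) : ℝ :=
  (μ - ν) * Real.pi / ∫ x : ℝ, 1 / (x * hInv μ ν g x * hInvDeriv μ ν g x)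

/-- `F'(x) = κ/(x h⁻¹(x) (h⁻¹)'(x))`. -/
noncomputable def Fder (μ ν : ℝ) (g : ℝ → ℝ) (x : ℝ) : ℝ :=
  kappa μ ν g / (x * hInv μ ν g x * hInvDeriv μ ν g x)

/-- `F = F_g`, the antiderivative of `Fder` with `F(+∞) = 0`. -/
noncomputable def Fg (μ ν : ℝ) (g : ℝ → ℝ) (x : ℝ) : ℝ :=
  -∫ y in Set.Ioi x, Fder μ ν g y

/-- `θ(x)`: the continuous branch of `arg (x − i)`, i.e. `arctan(−1/x)` for `x > 0`,
`arctan(−1/x) − π` for `x < 0`, and `−π/2` at `x = 0`. -/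
noncomputable def theta (x : ℝ) : ℝ :=
  if x = 0 then -(Real.pi / 2)
  else if x < 0 then Real.arctan (-1 / x) - Real.pi
  else Real.arctan (-1 / x)

/-- `HasHilbertAt f x v`: the principal value `(1/π) lim_{ε→0⁺} ∫_{|x−y|>ε} f(y)/(x−y) dy`
exists and equals `v`. -/
def HasHilbertAt (f : ℝ → ℝ) (x v : ℝ) : Prop :=
  Filter.Tendsto
    (fun ε : ℝ => (1 / Real.pi) * ∫ y in {y : ℝ | ε < |x - y|}, f y / (x - y))
    (nhdsWithin 0 (Set.Ioi 0)) (nhds v)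

/-- `G(x) = g(x) + (1/2)(μ−ν) ln(x²+1)`. -/
noncomputable def Gfun (μ ν : ℝ) (g : ℝ → ℝ) (x : ℝ) : ℝ :=
  g x + (1 / 2) * (μ - ν) * Real.log (x ^ 2 + 1)

/-- `g` is a solution of system (3.12): `g` is bounded and continuous, the principal
value `T[g](x) = H(F_g − (μ−ν)θ)(x)` exists for every `x`, and `g = T[g]`. -/
def IsSolution (μ ν : ℝ) (g : ℝ → ℝ) : Prop :=
  Continuous g ∧ (∃ M : ℝ, ∀ x, |g x| ≤ M) ∧
    ∀ x : ℝ, HasHilbertAt (fun y => Fg μ ν g y - (μ - ν) * theta y) x (g x)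

noncomputable def wfun (μ ν : ℝ) (x : ℝ) : ℝ := |x| ^ (ν - 1) * (x ^ 2 + 1) ^ ((μ - ν) / 2)

noncomputable def Hfun (μ ν : ℝ) (x : ℝ) : ℝ := ∫ y in (0:ℝ)..x, wfun μ ν y

lemma wfun_nonneg (μ ν x : ℝ) : 0 ≤ wfun μ ν x := by
  unfold wfun; positivity

lemma wfun_pos (μ ν : ℝ) {x : ℝ} (hx : x ≠ 0) : 0 < wfun μ ν x := by
  unfold wfun
  have h : 0 < |x| := abs_pos.2 hx
  have h2 : (0:ℝ) < x ^ 2 + 1 := by positivity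
  positivity

lemma wfun_even (μ ν x : ℝ) : wfun μ ν (-x) = wfun μ ν x := by
  simp [wfun, abs_neg, neg_sq]

lemma intervalIntegrable_abs_rpow {r : ℝ} (hr : -1 < r) (a b : ℝ) :
    IntervalIntegrable (fun y : ℝ => |y| ^ r) volume a b := by
  have base : ∀ c : ℝ, 0 ≤ c → IntervalIntegrable (fun y : ℝ => |y| ^ r) volume 0 c := by
    intro c hc
    refine (intervalIntegral.intervalIntegrable_rpow' hr).congr_ae ?_
    have : ∀ᵐ y ∂(volume.restrict (Set.uIoc (0:ℝ) c)), y ^ r = |y| ^ r := by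
      rw [ae_restrict_iff' measurableSet_uIoc]
      filter_upwards with y hy
      rw [uIoc_of_le hc] at hy
      rw [abs_of_pos hy.1]
    exact this
  have base' : ∀ c : ℝ, IntervalIntegrable (fun y : ℝ => |y| ^ r) volume 0 c := by
    intro c
    rcases le_or_gt 0 c with hc | hc
    · exact base c hc
    · have := (IntervalIntegrable.iff_comp_neg).mp (base (-c) (by linarith))
      simpa using this
  exact (base' a).symm.trans (base' b)

lemma intervalIntegrable_mul_exp {μ ν : ℝ} (hν1 : 0 < ν) (hμν : ν ≤ μ)
    {g : ℝ → ℝ} (hg : Continuous g) {M : ℝ} (hM : ∀ x, |g x| ≤ M) (a b : ℝ) :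
    IntervalIntegrable (fun y => wfun μ ν y * Real.exp (g y)) volume a b := by
  set K := max |a| |b| with hK
  have hK0 : 0 ≤ K := le_trans (abs_nonneg a) (le_max_left _ _)
  set C := (K ^ 2 + 1) ^ ((μ - ν) / 2) * Real.exp M with hC
  refine ((intervalIntegrable_abs_rpow (by linarith : (-1:ℝ) < ν - 1) a b).const_mul C).mono_fun'
    ?_ ?_
  · apply Measurable.aestronglyMeasurable
    unfold wfun
    fun_prop
  · rw [Filter.EventuallyLE, ae_restrict_iff' measurableSet_uIoc]
    filter_upwards with y hy
    have h1 : y ≤ K := le_trans hy.2 (max_le_max (le_abs_self a) (le_abs_self b))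
    have h2 : -K ≤ y := by
      have : -K ≤ a ⊓ b :=
        le_min (le_trans (neg_le_neg (le_max_left _ _)) (neg_abs_le a))
          (le_trans (neg_le_neg (le_max_right _ _)) (neg_abs_le b))
      linarith [hy.1]
    have hyK : |y| ≤ K := abs_le.2 ⟨h2, h1⟩
    have hsq : y ^ 2 ≤ K ^ 2 := by
      have := sq_abs y
      nlinarith [abs_nonneg y]
    have hb1 : (y ^ 2 + 1) ^ ((μ - ν) / 2) ≤ (K ^ 2 + 1) ^ ((μ - ν) / 2) :=
      Real.rpow_le_rpow (by positivity) (by linarith) (by linarith)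
    have hb2 : Real.exp (g y) ≤ Real.exp M := Real.exp_le_exp.2 ((le_abs_self _).trans (hM y))
    have hmul : (y ^ 2 + 1) ^ ((μ - ν) / 2) * Real.exp (g y) ≤ C :=
      mul_le_mul hb1 hb2 (Real.exp_pos _).le (by positivity)
    have hnn : 0 ≤ wfun μ ν y * Real.exp (g y) :=
      mul_nonneg (wfun_nonneg μ ν y) (Real.exp_pos _).le
    rw [Real.norm_eq_abs, abs_of_nonneg hnn]
    calc wfun μ ν y * Real.exp (g y)
        = |y| ^ (ν - 1) * ((y ^ 2 + 1) ^ ((μ - ν) / 2) * Real.exp (g y)) := by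
          unfold wfun; ring
      _ ≤ |y| ^ (ν - 1) * C := by
          exact mul_le_mul_of_nonneg_left hmul (Real.rpow_nonneg (abs_nonneg y) _)
      _ = C * |y| ^ (ν - 1) := by ring

lemma intervalIntegrable_wfun {μ ν : ℝ} (hν1 : 0 < ν) (hμν : ν ≤ μ) (a b : ℝ) :
    IntervalIntegrable (wfun μ ν) volume a b := by
  have := intervalIntegrable_mul_exp hν1 hμν (g := fun _ => (0:ℝ)) continuous_const
    (M := 0) (fun x => by simp) a b
  simpa using this

lemma Hfun_pos {μ ν : ℝ} (hν1 : 0 < ν) (hμν : ν ≤ μ) {x : ℝ} (hx : 0 < x) :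
    0 < Hfun μ ν x :=
  intervalIntegral.intervalIntegral_pos_of_pos_on (intervalIntegrable_wfun hν1 hμν 0 x)
    (fun y hy => wfun_pos μ ν (ne_of_gt hy.1)) hx

lemma Hfun_neg_eq {μ ν : ℝ} (x : ℝ) : Hfun μ ν (-x) = -Hfun μ ν x := by
  have h : (∫ y in (0:ℝ)..x, wfun μ ν (-y)) = ∫ y in (-x)..(0:ℝ), wfun μ ν y := by
    simpa using intervalIntegral.integral_comp_neg (a := (0:ℝ)) (b := x) (f := wfun μ ν)
  simp only [wfun_even] at h
  have h2 : (∫ y in (-x)..(0:ℝ), wfun μ ν y) = -∫ y in (0:ℝ)..(-x), wfun μ ν y :=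
    intervalIntegral.integral_symm _ _
  unfold Hfun
  rw [h2] at h
  linarith

lemma xHfun_pos {μ ν : ℝ} (hν1 : 0 < ν) (hμν : ν ≤ μ) {x : ℝ} (hx : x ≠ 0) :
    0 < x * Hfun μ ν x := by
  rcases hx.lt_or_gt with h | h
  · have h1 : 0 < Hfun μ ν (-x) := Hfun_pos hν1 hμν (by linarith)
    rw [Hfun_neg_eq] at h1
    have h2 : Hfun μ ν x < 0 := by linarith
    exact mul_pos_of_neg_of_neg h h2
  · exact mul_pos h (Hfun_pos hν1 hμν h)

lemma hInv_eq {μ ν : ℝ} (g : ℝ → ℝ) (x : ℝ) :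
    hInv μ ν g x = ∫ y in (0:ℝ)..x, wfun μ ν y * Real.exp (g y) := rfl

lemma hInvDeriv_eq {μ ν : ℝ} (g : ℝ → ℝ) (x : ℝ) :
    hInvDeriv μ ν g x = wfun μ ν x * Real.exp (g x) := rfl

lemma sandwich {μ ν : ℝ} (hν1 : 0 < ν) (hμν : ν ≤ μ)
    {g : ℝ → ℝ} (hg : Continuous g) {M : ℝ} (hM : ∀ x, |g x| ≤ M) {x : ℝ} (hx : x ≠ 0) :
    Real.exp (-M) * (x * Hfun μ ν x) ≤ x * hInv μ ν g x ∧
      x * hInv μ ν g x ≤ Real.exp M * (x * Hfun μ ν x) := by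
  have key : ∀ u v : ℝ, u ≤ v →
      Real.exp (-M) * (∫ y in u..v, wfun μ ν y) ≤ (∫ y in u..v, wfun μ ν y * Real.exp (g y)) ∧
      (∫ y in u..v, wfun μ ν y * Real.exp (g y)) ≤ Real.exp M * ∫ y in u..v, wfun μ ν y := by
    intro u v huv
    constructor
    · have := intervalIntegral.integral_mono_on huv
        ((intervalIntegrable_wfun hν1 hμν u v).const_mul (Real.exp (-M)))
        (intervalIntegrable_mul_exp hν1 hμν hg hM u v)
        (fun y _ => by
          rw [mul_comm (Real.exp (-M))]
          exact mul_le_mul_of_nonneg_left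
            (Real.exp_le_exp.2 (abs_le.1 (hM y)).1) (wfun_nonneg μ ν y))
      rwa [intervalIntegral.integral_const_mul] at this
    · have := intervalIntegral.integral_mono_on huv
        (intervalIntegrable_mul_exp hν1 hμν hg hM u v)
        ((intervalIntegrable_wfun hν1 hμν u v).const_mul (Real.exp M))
        (fun y _ => by
          rw [mul_comm (Real.exp M)]
          exact mul_le_mul_of_nonneg_left
            (Real.exp_le_exp.2 ((le_abs_self _).trans (hM y))) (wfun_nonneg μ ν y))
      rwa [intervalIntegral.integral_const_mul] at this
  rcases hx.lt_or_gt with h | h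
  · obtain ⟨k1, k2⟩ := key x 0 h.le
    have hsym1 : hInv μ ν g x = -∫ y in x..(0:ℝ), wfun μ ν y * Real.exp (g y) := by
      rw [hInv_eq]; exact intervalIntegral.integral_symm _ _
    have hsym2 : Hfun μ ν x = -∫ y in x..(0:ℝ), wfun μ ν y := by
      unfold Hfun; exact intervalIntegral.integral_symm _ _
    constructor
    · rw [hsym1, hsym2]; nlinarith
    · rw [hsym1, hsym2]; nlinarith
  · obtain ⟨k1, k2⟩ := key 0 x h.le
    rw [hInv_eq] at *
    unfold Hfun
    constructor
    · nlinarith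
    · nlinarith
lemma wfun_lb1 {μ ν : ℝ} (hμν : ν ≤ μ) {x : ℝ} (hx : 0 < x) :
    x ^ (ν - 1) ≤ wfun μ ν x := by
  unfold wfun
  rw [abs_of_pos hx]
  exact le_mul_of_one_le_right (Real.rpow_nonneg hx.le _)
    (Real.one_le_rpow (by nlinarith) (by linarith))

lemma wfun_lb2 {μ ν : ℝ} (hμν : ν ≤ μ) {x : ℝ} (hx : 1 ≤ x) :
    x ^ (μ - 1) ≤ wfun μ ν x := by
  have hx0 : (0:ℝ) < x := lt_of_lt_of_le one_pos hx
  unfold wfun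
  rw [abs_of_pos hx0]
  have e1 : (x ^ 2 : ℝ) ^ ((μ - ν) / 2) ≤ (x ^ 2 + 1) ^ ((μ - ν) / 2) :=
    Real.rpow_le_rpow (by positivity) (by linarith) (by linarith)
  have e2 : (x ^ 2 : ℝ) ^ ((μ - ν) / 2) = x ^ (μ - ν) := by
    rw [← Real.rpow_natCast x 2, ← Real.rpow_mul hx0.le]
    congr 1
    push_cast
    ring
  have e3 : x ^ (ν - 1) * x ^ (μ - ν) = x ^ (μ - 1) := by
    rw [← Real.rpow_add hx0]; ring_nf
  calc x ^ (μ - 1) = x ^ (ν - 1) * x ^ (μ - ν) := e3.symm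
    _ ≤ x ^ (ν - 1) * (x ^ 2 + 1) ^ ((μ - ν) / 2) := by
        rw [← e2]
        exact mul_le_mul_of_nonneg_left e1 (Real.rpow_nonneg hx0.le _)

lemma Hfun_lb1 {μ ν : ℝ} (hν1 : 0 < ν) (hν2 : ν < 1 / 2) (hμν : ν ≤ μ) {x : ℝ} (hx0 : 0 < x) :
    x ^ ν / ν ≤ Hfun μ ν x := by
  have h := intervalIntegral.integral_mono_on hx0.le
    (intervalIntegral.intervalIntegrable_rpow' (by linarith : (-1:ℝ) < ν - 1))
    (intervalIntegrable_wfun hν1 hμν 0 x)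
    (fun y hy => by
      rcases eq_or_lt_of_le hy.1 with h0 | h0
      · rw [← h0, Real.zero_rpow (by linarith : ν - 1 ≠ 0)]
        exact wfun_nonneg μ ν 0
      · exact wfun_lb1 hμν h0)
  rw [integral_rpow (Or.inl (by linarith : (-1:ℝ) < ν - 1))] at h
  have he : ν - 1 + 1 = ν := by ring
  rw [he, Real.zero_rpow hν1.ne', sub_zero] at h
  exact h

lemma Hfun_lb2 {μ ν : ℝ} (hν1 : 0 < ν) (hν2 : ν < 1 / 2) (hμν : ν ≤ μ) {x : ℝ} (hx : 1 ≤ x) :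
    x ^ μ / μ ≤ Hfun μ ν x := by
  have hμ0 : 0 < μ := lt_of_lt_of_le hν1 hμν
  have hsplit : Hfun μ ν 1 + (∫ y in (1:ℝ)..x, wfun μ ν y) = Hfun μ ν x :=
    intervalIntegral.integral_add_adjacent_intervals
      (intervalIntegrable_wfun hν1 hμν 0 1) (intervalIntegrable_wfun hν1 hμν 1 x)
  have h1 : (1:ℝ) / ν ≤ Hfun μ ν 1 := by
    have := Hfun_lb1 hν1 hν2 hμν (x := 1) one_pos
    rwa [Real.one_rpow] at this
  have h2 : (x ^ μ - 1) / μ ≤ ∫ y in (1:ℝ)..x, wfun μ ν y := by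
    have h := intervalIntegral.integral_mono_on hx
      (intervalIntegral.intervalIntegrable_rpow' (by linarith : (-1:ℝ) < μ - 1))
      (intervalIntegrable_wfun hν1 hμν 1 x)
      (fun y hy => wfun_lb2 hμν hy.1)
    rw [integral_rpow (Or.inl (by linarith : (-1:ℝ) < μ - 1))] at h
    have he : μ - 1 + 1 = μ := by ring
    rw [he, Real.one_rpow] at h
    exact h
  have h3 : (1:ℝ) / μ ≤ 1 / ν := one_div_le_one_div_of_le hν1 hμν
  have h4 : (x ^ μ - 1) / μ + 1 / μ = x ^ μ / μ := by field_simp; ring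
  linarith

noncomputable def f0fun (μ ν : ℝ) (x : ℝ) : ℝ := 1 / (x * Hfun μ ν x * wfun μ ν x)

lemma D0_pos {μ ν : ℝ} (hν1 : 0 < ν) (hμν : ν ≤ μ) {x : ℝ} (hx : x ≠ 0) :
    0 < x * Hfun μ ν x * wfun μ ν x :=
  mul_pos (xHfun_pos hν1 hμν hx) (wfun_pos μ ν hx)

lemma f0_nonneg {μ ν : ℝ} (hν1 : 0 < ν) (hμν : ν ≤ μ) (x : ℝ) : 0 ≤ f0fun μ ν x := by
  rcases eq_or_ne x 0 with h | h
  · simp [f0fun, h]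
  · exact le_of_lt (by unfold f0fun; exact one_div_pos.2 (D0_pos hν1 hμν h))

lemma f0_even {μ ν : ℝ} (x : ℝ) : f0fun μ ν (-x) = f0fun μ ν x := by
  unfold f0fun
  rw [Hfun_neg_eq, wfun_even]
  ring_nf

lemma f0_pos {μ ν : ℝ} (hν1 : 0 < ν) (hμν : ν ≤ μ) {x : ℝ} (hx : x ≠ 0) :
    0 < f0fun μ ν x :=
  one_div_pos.2 (D0_pos hν1 hμν hx)
lemma f0_le {μ ν p : ℝ} (hν1 : 0 < ν) (hμν : ν ≤ μ) {x : ℝ} (hx0 : 0 < x) (hp : 0 < p)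
    (hH : x ^ p / p ≤ Hfun μ ν x) (hw : x ^ (p - 1) ≤ wfun μ ν x) :
    f0fun μ ν x ≤ p * x ^ (-(2 * p)) := by
  have hxH : 0 < x * Hfun μ ν x := xHfun_pos hν1 hμν hx0.ne'
  have key : x * (x ^ p / p) * x ^ (p - 1) = x ^ (2 * p) / p := by
    have h2 : x ^ (2 * p) = x ^ (1:ℝ) * x ^ p * x ^ (p - 1) := by
      rw [← Real.rpow_add hx0, ← Real.rpow_add hx0]
      congr 1
      ring
    rw [h2, Real.rpow_one]
    ring
  have hd : x ^ (2 * p) / p ≤ x * Hfun μ ν x * wfun μ ν x := by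
    rw [← key]
    have step1 : x * (x ^ p / p) ≤ x * Hfun μ ν x := mul_le_mul_of_nonneg_left hH hx0.le
    exact mul_le_mul step1 hw (Real.rpow_nonneg hx0.le _) hxH.le
  have hdpos : 0 < x ^ (2 * p) / p := by positivity
  have h := one_div_le_one_div_of_le hdpos hd
  rw [one_div_div] at h
  unfold f0fun
  refine le_trans h (le_of_eq ?_)
  rw [Real.rpow_neg hx0.le, div_eq_mul_inv]

lemma f0_bound1 {μ ν : ℝ} (hν1 : 0 < ν) (hν2 : ν < 1 / 2) (hμν : ν ≤ μ) {x : ℝ}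
    (hx : x ∈ Set.Ioc (0:ℝ) 1) : f0fun μ ν x ≤ ν * x ^ (-(2 * ν)) :=
  f0_le hν1 hμν hx.1 hν1 (Hfun_lb1 hν1 hν2 hμν hx.1) (wfun_lb1 hμν hx.1)

lemma f0_bound2 {μ ν : ℝ} (hν1 : 0 < ν) (hν2 : ν < 1 / 2) (hμν : ν ≤ μ) {x : ℝ}
    (hx : x ∈ Set.Ioi (1:ℝ)) : f0fun μ ν x ≤ μ * x ^ (-(2 * μ)) := by
  have hx1 : (1:ℝ) ≤ x := le_of_lt hx
  have hx0 : (0:ℝ) < x := lt_of_lt_of_le one_pos hx1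
  exact f0_le hν1 hμν hx0 (lt_of_lt_of_le hν1 hμν)
    (Hfun_lb2 hν1 hν2 hμν hx1) (wfun_lb2 hμν hx1)

lemma Hfun_continuous {μ ν : ℝ} (hν1 : 0 < ν) (hμν : ν ≤ μ) : Continuous (Hfun μ ν) :=
  intervalIntegral.continuous_primitive (fun a b => intervalIntegrable_wfun hν1 hμν a b) 0

lemma f0_measurable {μ ν : ℝ} (hν1 : 0 < ν) (hμν : ν ≤ μ) : Measurable (f0fun μ ν) := by
  unfold f0fun
  refine Measurable.div measurable_const ?_
  have hH := (Hfun_continuous hν1 hμν).measurable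
  have hw : Measurable (wfun μ ν) := by unfold wfun; fun_prop
  exact (measurable_id.mul hH).mul hw

lemma integrable_f0 {μ ν : ℝ} (hμ1 : 1 / 2 < μ) (hν1 : 0 < ν) (hν2 : ν < 1 / 2) :
    Integrable (f0fun μ ν) := by
  have hμν : ν ≤ μ := le_of_lt (lt_trans hν2 hμ1)
  have i1 : IntegrableOn (f0fun μ ν) (Set.Ioc 0 1) := by
    refine Integrable.mono'
      (((intervalIntegral.intervalIntegrable_rpow' (a := 0) (b := 1)
        (by linarith : (-1:ℝ) < -(2 * ν))).1).const_mul ν)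
      ((f0_measurable hν1 hμν).aestronglyMeasurable.restrict) ?_
    rw [ae_restrict_iff' measurableSet_Ioc]
    filter_upwards with x hx
    rw [Real.norm_eq_abs, abs_of_nonneg (f0_nonneg hν1 hμν x)]
    exact f0_bound1 hν1 hν2 hμν hx
  have i2 : IntegrableOn (f0fun μ ν) (Set.Ioi 1) := by
    refine Integrable.mono'
      ((integrableOn_Ioi_rpow_of_lt (by linarith : -(2 * μ) < -1) one_pos).const_mul μ)
      ((f0_measurable hν1 hμν).aestronglyMeasurable.restrict) ?_
    rw [ae_restrict_iff' measurableSet_Ioi]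
    filter_upwards with x hx
    rw [Real.norm_eq_abs, abs_of_nonneg (f0_nonneg hν1 hμν x)]
    exact f0_bound2 hν1 hν2 hμν hx
  have i3 : IntegrableOn (f0fun μ ν) (Set.Ioi 0) := by
    rw [← Set.Ioc_union_Ioi_eq_Ioi (zero_le_one : (0:ℝ) ≤ 1)]
    exact i1.union i2
  have i4 : IntegrableOn (f0fun μ ν) (Set.Iio 0) := by
    have h := ((Measure.measurePreserving_neg (volume : Measure ℝ)).integrableOn_comp_preimage
      (Homeomorph.neg ℝ).measurableEmbedding).2 i3
    have hs : (Neg.neg ⁻¹' (Set.Ioi (0:ℝ))) = Set.Iio 0 := by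
      ext z; simp
    have hf : (f0fun μ ν ∘ Neg.neg) = f0fun μ ν := funext fun z => f0_even z
    rwa [hs, hf] at h
  have i5 : IntegrableOn (f0fun μ ν) ({(0:ℝ)}ᶜ) := by
    rw [← Set.Iio_union_Ioi]
    exact i4.union i3
  have hres : (volume : Measure ℝ).restrict ({(0:ℝ)}ᶜ) = volume := by
    rw [Measure.restrict_congr_set (t := Set.univ), Measure.restrict_univ]
    rw [ae_eq_univ]
    simp
  rw [← integrableOn_univ]
  unfold IntegrableOn at i5 ⊢
  rwa [hres, ← Measure.restrict_univ (μ := (volume : Measure ℝ))] at i5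


/-- Lemma 5.3: the constant `κ(g)` satisfies
`(1/c(μ,ν)) e^(−2‖g‖_∞) ≤ κ ≤ c(μ,ν) e^(2‖g‖_∞)`. -/
theorem statement6 (μ ν : ℝ) (hμ1 : 1 / 2 < μ) (hμ2 : μ ≤ 2) (hν1 : 0 < ν) (hν2 : ν < 1 / 2) :
    ∃ c : ℝ, 0 < c ∧ ∀ g : ℝ → ℝ, Continuous g → ∀ M : ℝ, (∀ x : ℝ, |g x| ≤ M) →
      1 / c * Real.exp (-2 * M) ≤ kappa μ ν g ∧ kappa μ ν g ≤ c * Real.exp (2 * M) := by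
  have hμν : ν ≤ μ := le_of_lt (lt_trans hν2 hμ1)
  have hμ0 : 0 < μ := by linarith
  have hint0 : Integrable (f0fun μ ν) := integrable_f0 hμ1 hν1 hν2
  set A : ℝ := ∫ x : ℝ, f0fun μ ν x with hA
  have hApos : 0 < A := by
    rw [hA]
    refine (integral_pos_iff_support_of_nonneg_ae
      (Filter.Eventually.of_forall (f0_nonneg hν1 hμν)) hint0).2 ?_
    have hsub : Set.Ioo (1:ℝ) 2 ⊆ Function.support (f0fun μ ν) := fun x hx =>
      (f0_pos hν1 hμν (ne_of_gt (lt_trans one_pos hx.1))).ne'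
    calc (0:ENNReal) < volume (Set.Ioo (1:ℝ) 2) := by rw [Real.volume_Ioo]; norm_num
      _ ≤ _ := measure_mono hsub
  set P : ℝ := (μ - ν) * Real.pi with hP
  have hPpos : 0 < P := mul_pos (by linarith) Real.pi_pos
  refine ⟨max (P / A) (A / P), lt_of_lt_of_le (div_pos hPpos hApos) (le_max_left _ _), ?_⟩
  intro g hg M hM
  set fg : ℝ → ℝ := fun x => 1 / (x * hInv μ ν g x * hInvDeriv μ ν g x) with hfg
  have hfgmeas : Measurable fg := by
    have hHc : Continuous (hInv μ ν g) :=
      intervalIntegral.continuous_primitive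
        (fun a b => intervalIntegrable_mul_exp hν1 hμν hg hM a b) 0
    have h1 : Measurable (hInvDeriv μ ν g) := by unfold hInvDeriv; fun_prop
    exact Measurable.div measurable_const ((measurable_id.mul hHc.measurable).mul h1)
  have hexp2 : Real.exp (2 * M) = Real.exp M * Real.exp M := by
    rw [← Real.exp_add]; ring_nf
  have hexp2' : Real.exp (-(2 * M)) = Real.exp (-M) * Real.exp (-M) := by
    rw [← Real.exp_add]; ring_nf
  have key : ∀ x : ℝ, Real.exp (-(2 * M)) * f0fun μ ν x ≤ fg x ∧
      fg x ≤ Real.exp (2 * M) * f0fun μ ν x := by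
    intro x
    rcases eq_or_ne x 0 with h0 | h0
    · simp [hfg, f0fun, h0]
    · obtain ⟨s1, s2⟩ := sandwich hν1 hμν hg hM h0
      have hxH : 0 < x * Hfun μ ν x := xHfun_pos hν1 hμν h0
      have hw : 0 < wfun μ ν x := wfun_pos μ ν h0
      have hD0 : 0 < x * Hfun μ ν x * wfun μ ν x := D0_pos hν1 hμν h0
      have hd1 : hInvDeriv μ ν g x ≤ Real.exp M * wfun μ ν x := by
        rw [hInvDeriv_eq, mul_comm (Real.exp M)]
        exact mul_le_mul_of_nonneg_left
          (Real.exp_le_exp.2 ((le_abs_self _).trans (hM x))) (wfun_nonneg μ ν x)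
      have hd2 : Real.exp (-M) * wfun μ ν x ≤ hInvDeriv μ ν g x := by
        rw [hInvDeriv_eq, mul_comm (Real.exp (-M))]
        exact mul_le_mul_of_nonneg_left
          (Real.exp_le_exp.2 (abs_le.1 (hM x)).1) (wfun_nonneg μ ν x)
      have hxhInv : 0 ≤ x * hInv μ ν g x :=
        le_trans (by positivity) s1
      have hder_nonneg : 0 ≤ hInvDeriv μ ν g x := by
        rw [hInvDeriv_eq]; positivity
      have hDlow : Real.exp (-(2 * M)) * (x * Hfun μ ν x * wfun μ ν x) ≤
          x * hInv μ ν g x * hInvDeriv μ ν g x := by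
        calc Real.exp (-(2 * M)) * (x * Hfun μ ν x * wfun μ ν x)
            = (Real.exp (-M) * (x * Hfun μ ν x)) * (Real.exp (-M) * wfun μ ν x) := by
              rw [hexp2']; ring
          _ ≤ (x * hInv μ ν g x) * hInvDeriv μ ν g x :=
              mul_le_mul s1 hd2 (by positivity) hxhInv
      have hDhigh : x * hInv μ ν g x * hInvDeriv μ ν g x ≤
          Real.exp (2 * M) * (x * Hfun μ ν x * wfun μ ν x) := by
        calc x * hInv μ ν g x * hInvDeriv μ ν g x
            ≤ (Real.exp M * (x * Hfun μ ν x)) * (Real.exp M * wfun μ ν x) :=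
              mul_le_mul s2 hd1 hder_nonneg (by positivity)
          _ = Real.exp (2 * M) * (x * Hfun μ ν x * wfun μ ν x) := by
              rw [hexp2]; ring
      have hDgpos : 0 < x * hInv μ ν g x * hInvDeriv μ ν g x :=
        lt_of_lt_of_le (by positivity) hDlow
      constructor
      · have h := one_div_le_one_div_of_le hDgpos hDhigh
        have heq : (1:ℝ) / (Real.exp (2 * M) * (x * Hfun μ ν x * wfun μ ν x)) =
            Real.exp (-(2 * M)) * (1 / (x * Hfun μ ν x * wfun μ ν x)) := by
          rw [Real.exp_neg]
          field_simp
        rw [heq] at h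
        exact h
      · have h := one_div_le_one_div_of_le
          (by positivity : (0:ℝ) < Real.exp (-(2 * M)) * (x * Hfun μ ν x * wfun μ ν x)) hDlow
        have heq : (1:ℝ) / (Real.exp (-(2 * M)) * (x * Hfun μ ν x * wfun μ ν x)) =
            Real.exp (2 * M) * (1 / (x * Hfun μ ν x * wfun μ ν x)) := by
          rw [Real.exp_neg]
          field_simp
        rw [heq] at h
        exact h
  have hfg_nonneg : ∀ x, 0 ≤ fg x := fun x =>
    le_trans (mul_nonneg (Real.exp_pos _).le (f0_nonneg hν1 hμν x)) (key x).1
  have hintfg : Integrable fg := by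
    refine (hint0.const_mul (Real.exp (2 * M))).mono' hfgmeas.aestronglyMeasurable
      (ae_of_all _ fun x => ?_)
    rw [Real.norm_eq_abs, abs_of_nonneg (hfg_nonneg x)]
    exact (key x).2
  have hI1 : (∫ x : ℝ, fg x) ≤ Real.exp (2 * M) * A := by
    calc (∫ x : ℝ, fg x) ≤ ∫ x : ℝ, Real.exp (2 * M) * f0fun μ ν x :=
          integral_mono hintfg (hint0.const_mul _) (fun x => (key x).2)
      _ = Real.exp (2 * M) * A := by rw [integral_const_mul]
  have hI2 : Real.exp (-(2 * M)) * A ≤ ∫ x : ℝ, fg x := by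
    calc Real.exp (-(2 * M)) * A = ∫ x : ℝ, Real.exp (-(2 * M)) * f0fun μ ν x := by
          rw [integral_const_mul]
      _ ≤ ∫ x : ℝ, fg x :=
          integral_mono (hint0.const_mul _) hintfg (fun x => (key x).1)
  have hIpos : 0 < ∫ x : ℝ, fg x := lt_of_lt_of_le (by positivity) hI2
  have hkappa : kappa μ ν g = P / ∫ x : ℝ, fg x := rfl
  constructor
  · have hk : P / (Real.exp (2 * M) * A) ≤ kappa μ ν g := by
      rw [hkappa]
      gcongr

    refine le_trans ?_ hk
    have heq : P / (Real.exp (2 * M) * A) = P / A * Real.exp (-2 * M) := by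
      rw [div_mul_eq_div_div_swap, div_eq_mul_inv (P / A), ← Real.exp_neg,
        show -(2 * M) = (-2:ℝ) * M by ring]
    rw [heq]
    have hc : 1 / max (P / A) (A / P) ≤ P / A := by
      refine le_trans (one_div_le_one_div_of_le (div_pos hApos hPpos) (le_max_right _ _)) ?_
      rw [one_div_div]
    exact mul_le_mul_of_nonneg_right hc (Real.exp_pos _).le
  · have hk : kappa μ ν g ≤ P / (Real.exp (-(2 * M)) * A) := by
      rw [hkappa]
      gcongr

    refine le_trans hk ?_
    have heq : P / (Real.exp (-(2 * M)) * A) = P / A * Real.exp (2 * M) := by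
      rw [div_mul_eq_div_div_swap, div_eq_mul_inv (P / A), Real.exp_neg, inv_inv]
    rw [heq]
    exact mul_le_mul_of_nonneg_right (le_max_left _ _) (Real.exp_pos _).le
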